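/- Let N = 1, Ω = (a,b) ⊂ ℝ, and let k ≥ 1 be an integer. For r > 0 define c_{k+1}(r) := inf over a = t₀ < t₁ < … < t_k < t_{k+1} = b of max_i {rλ₁(t_{2i+1} − t_{2i}), λ₁(t_{2i+2} − t_{2i+1})}. Then the pair (r⁻¹c_{k+1}(r), c_{k+1}(r)) belongs to the Fučík spectrum F of −d²/dx² on H¹₀((a,b)). -/

import Mathlib

open Set
noncomputable section

/-- First Dirichlet eigenvalue of `-d²/dx²` on an interval of length `ℓ`:
`λ₁(ℓ) = π²/ℓ²`. -/
def lam1d (ℓ : ℝ) : ℝ := Real.pi ^ 2 / ℓ ^ 2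

/-- The value `max_i {rλ₁(t_{2i+1} − t_{2i}), λ₁(t_{2i+2} − t_{2i+1})}`
associated with a subdivision `t` of `[a,b]` into `k+1` intervals. -/
def fucikVal (r : ℝ) (k : ℕ) (t : ℕ → ℝ) : ℝ :=
  sSup ({ v : ℝ | ∃ i : ℕ, 2 * i + 1 ≤ k + 1 ∧ v = r * lam1d (t (2 * i + 1) - t (2 * i)) } ∪
        { v : ℝ | ∃ i : ℕ, 2 * i + 2 ≤ k + 1 ∧ v = lam1d (t (2 * i + 2) - t (2 * i + 1)) })

/-- `c_{k+1}(r) := inf over a = t₀ < t₁ < … < t_k < t_{k+1} = b` of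
`max_i {rλ₁(t_{2i+1} − t_{2i}), λ₁(t_{2i+2} − t_{2i+1})}`. -/
def ckr (a b : ℝ) (k : ℕ) (r : ℝ) : ℝ :=
  sInf { v : ℝ | ∃ t : ℕ → ℝ, t 0 = a ∧ t (k + 1) = b ∧
    (∀ i j : ℕ, i < j → j ≤ k + 1 → t i < t j) ∧ v = fucikVal r k t }

/-- `(lm, μ)` belongs to the Fučík spectrum of `-d²/dx²` on `H¹₀((a,b))`:
`−u'' = lm·u⁺ − μ·u⁻` on `(a,b)`, `u(a) = u(b) = 0`, has a nontrivial solution. -/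
def InFucik1D (a b : ℝ) (lm μ : ℝ) : Prop :=
  ∃ u : ℝ → ℝ, ContDiff ℝ 2 u ∧ u a = 0 ∧ u b = 0 ∧
    (∃ x ∈ Set.Ioo a b, u x ≠ 0) ∧
    ∀ x ∈ Set.Ioo a b,
      -(deriv (deriv u) x) = lm * max (u x) 0 - μ * max (-u x) 0


lemma hasDerivAt_if_le {s : ℝ} {f g : ℝ → ℝ} (hf : Differentiable ℝ f)
    (hg : Differentiable ℝ g) (h0 : f s = g s) (h1 : deriv f s = deriv g s) (x : ℝ) :
    HasDerivAt (fun y => if y ≤ s then f y else g y)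
      (if x ≤ s then deriv f x else deriv g x) x := by
  rcases lt_trichotomy x s with hx | hxs | hx
  · rw [if_pos hx.le]
    apply ((hf x).hasDerivAt).congr_of_eventuallyEq
    filter_upwards [Iio_mem_nhds hx] with y hy
    simp only [if_pos (le_of_lt (Set.mem_Iio.mp hy))]
  · subst hxs
    rw [if_pos le_rfl]
    have hIic : HasDerivWithinAt (fun y => if y ≤ x then f y else g y) (deriv f x)
        (Set.Iic x) x := by
      refine ((hf x).hasDerivAt.hasDerivWithinAt).congr ?_ ?_
      · intro y hy; simp only [if_pos (Set.mem_Iic.mp hy)]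
      · simp only [if_pos le_rfl]
    have hIci : HasDerivWithinAt (fun y => if y ≤ x then f y else g y) (deriv f x)
        (Set.Ici x) x := by
      rw [h1]
      refine ((hg x).hasDerivAt.hasDerivWithinAt).congr ?_ ?_
      · intro y hy
        rcases eq_or_lt_of_le (Set.mem_Ici.mp hy) with hxy | hy'
        · subst hxy; simp only [if_pos le_rfl]; exact h0
        · simp only [if_neg (not_le.mpr hy')]
      · simp only [if_pos le_rfl]; exact h0
    have h3 := (hIic.union hIci)
    rw [Set.Iic_union_Ici] at h3
    exact h3.hasDerivAt (by simp)
  · rw [if_neg (not_le.mpr hx)]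
    apply ((hg x).hasDerivAt).congr_of_eventuallyEq
    filter_upwards [Ioi_mem_nhds hx] with y hy
    simp only [if_neg (not_le.mpr (Set.mem_Ioi.mp hy))]

lemma deriv_if_le {s : ℝ} {f g : ℝ → ℝ} (hf : Differentiable ℝ f)
    (hg : Differentiable ℝ g) (h0 : f s = g s) (h1 : deriv f s = deriv g s) :
    deriv (fun y => if y ≤ s then f y else g y)
      = fun x => if x ≤ s then deriv f x else deriv g x :=
  funext fun x => (hasDerivAt_if_le hf hg h0 h1 x).deriv

lemma glue2 {s : ℝ} {f g : ℝ → ℝ} (hf : ContDiff ℝ 2 f) (hg : ContDiff ℝ 2 g)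
    (h0 : f s = g s) (h1 : deriv f s = deriv g s)
    (h2 : deriv (deriv f) s = deriv (deriv g) s) :
    ∃ u : ℝ → ℝ, ContDiff ℝ 2 u ∧
      (∀ x, x ≤ s → u x = f x ∧ deriv u x = deriv f x ∧
        deriv (deriv u) x = deriv (deriv f) x) ∧
      (∀ x, s ≤ x → u x = g x ∧ deriv u x = deriv g x ∧
        deriv (deriv u) x = deriv (deriv g) x) := by
  have h21 : (2 : WithTop ℕ∞) = 1 + 1 := by norm_num
  have hfd : Differentiable ℝ f := hf.differentiable (by norm_num)
  have hgd : Differentiable ℝ g := hg.differentiable (by norm_num)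
  have hf1 : ContDiff ℝ 1 (deriv f) := by
    rw [h21] at hf; exact (contDiff_succ_iff_deriv.mp hf).2.2
  have hg1 : ContDiff ℝ 1 (deriv g) := by
    rw [h21] at hg; exact (contDiff_succ_iff_deriv.mp hg).2.2
  have hfd1 : Differentiable ℝ (deriv f) := hf1.differentiable one_ne_zero
  have hgd1 : Differentiable ℝ (deriv g) := hg1.differentiable one_ne_zero
  have hfc2 : Continuous (deriv (deriv f)) := (contDiff_one_iff_deriv.mp hf1).2
  have hgc2 : Continuous (deriv (deriv g)) := (contDiff_one_iff_deriv.mp hg1).2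
  refine ⟨fun y => if y ≤ s then f y else g y, ?_, ?_, ?_⟩
  · have hd1 : deriv (fun y => if y ≤ s then f y else g y)
        = fun x => if x ≤ s then deriv f x else deriv g x := deriv_if_le hfd hgd h0 h1
    have hd2 : deriv (fun x => if x ≤ s then deriv f x else deriv g x)
        = fun x => if x ≤ s then deriv (deriv f) x else deriv (deriv g) x :=
      deriv_if_le hfd1 hgd1 h1 h2
    rw [h21, contDiff_succ_iff_deriv]
    refine ⟨fun x => (hasDerivAt_if_le hfd hgd h0 h1 x).differentiableAt, by simp, ?_⟩
    rw [hd1, contDiff_one_iff_deriv]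
    refine ⟨fun x => (hasDerivAt_if_le hfd1 hgd1 h1 h2 x).differentiableAt, ?_⟩
    rw [hd2]
    exact Continuous.if_le hfc2 hgc2 continuous_id continuous_const
      (fun x hx => by rw [hx, h2])
  · intro x hx
    have hd1 := deriv_if_le hfd hgd h0 h1
    have hd2 := deriv_if_le hfd1 hgd1 h1 h2
    refine ⟨by simp only [if_pos hx], ?_, ?_⟩
    · rw [hd1]; simp only [if_pos hx]
    · rw [hd1, hd2]; simp only [if_pos hx]
  · intro x hx
    have hd1 := deriv_if_le hfd hgd h0 h1
    have hd2 := deriv_if_le hfd1 hgd1 h1 h2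
    rcases eq_or_lt_of_le hx with hsx | hx'
    · subst hsx
      refine ⟨by simp only [if_pos le_rfl]; exact h0, ?_, ?_⟩
      · rw [hd1]; simp only [if_pos le_rfl]; exact h1
      · rw [hd1, hd2]; simp only [if_pos le_rfl]; exact h2
    · refine ⟨by simp only [if_neg (not_le.mpr hx')], ?_, ?_⟩
      · rw [hd1]; simp only [if_neg (not_le.mpr hx')]
      · rw [hd1, hd2]; simp only [if_neg (not_le.mpr hx')]

lemma multi_glue (k : ℕ) (t : ℕ → ℝ) (F : ℕ → ℝ → ℝ)
    (hF : ∀ i, ContDiff ℝ 2 (F i))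
    (hj : ∀ i, F i (t (i+1)) = F (i+1) (t (i+1)) ∧
        deriv (F i) (t (i+1)) = deriv (F (i+1)) (t (i+1)) ∧
        deriv (deriv (F i)) (t (i+1)) = deriv (deriv (F (i+1))) (t (i+1)))
    (hmono : ∀ i j : ℕ, i ≤ j → t i ≤ t j) :
    ∃ u : ℝ → ℝ, ContDiff ℝ 2 u ∧
      ∀ i, i ≤ k → ∀ x, t i ≤ x → x ≤ t (i+1) →
        u x = F i x ∧ deriv u x = deriv (F i) x ∧
        deriv (deriv u) x = deriv (deriv (F i)) x := by
  induction k generalizing t F with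
  | zero =>
    refine ⟨F 0, hF 0, ?_⟩
    intro i hi x _ _
    interval_cases i
    exact ⟨rfl, rfl, rfl⟩
  | succ k ih =>
    obtain ⟨v, hv, hvP⟩ := ih (fun i => t (i+1)) (fun i => F (i+1))
      (fun i => hF (i+1)) (fun i => hj (i+1)) (fun i j hij => hmono _ _ (by omega))
    have hv1 := hvP 0 (Nat.zero_le _) (t 1) le_rfl (hmono 1 2 (by omega))
    obtain ⟨u, hu, hle, hge⟩ := glue2 (hF 0) hv
      (by rw [hv1.1]; exact (hj 0).1)
      (by rw [hv1.2.1]; exact (hj 0).2.1)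
      (by rw [hv1.2.2]; exact (hj 0).2.2)
    refine ⟨u, hu, ?_⟩
    intro i hi x hx1 hx2
    cases i with
    | zero => exact hle x hx2
    | succ j =>
      have hx1' : t 1 ≤ x := le_trans (hmono 1 (j+1) (by omega)) hx1
      obtain ⟨e0, e1, e2⟩ := hge x hx1'
      obtain ⟨f0, f1, f2⟩ := hvP j (by omega) x hx1 hx2
      exact ⟨e0.trans f0, e1.trans f1, e2.trans f2⟩

lemma hasDerivAt_piece (A q d : ℝ) (x : ℝ) :
    HasDerivAt (fun y => A * Real.sin (q * (y - d))) ((A * q) * Real.cos (q * (x - d))) x := by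
  have h : HasDerivAt (fun y : ℝ => q * (y - d)) q x := by
    simpa using ((hasDerivAt_id x).sub_const d).const_mul q
  have := (h.sin).const_mul A
  rw [show (A * q) * Real.cos (q * (x - d)) = A * (Real.cos (q * (x - d)) * q) by ring]
  exact this

lemma hasDerivAt_piece' (B q d : ℝ) (x : ℝ) :
    HasDerivAt (fun y => B * Real.cos (q * (y - d))) (-((B * q) * Real.sin (q * (x - d)))) x := by
  have h : HasDerivAt (fun y : ℝ => q * (y - d)) q x := by
    simpa using ((hasDerivAt_id x).sub_const d).const_mul q
  have := (h.cos).const_mul B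
  rw [show -((B * q) * Real.sin (q * (x - d))) = B * (-Real.sin (q * (x - d)) * q) by ring]
  exact this

lemma deriv_piece (A q d : ℝ) :
    deriv (fun y => A * Real.sin (q * (y - d)))
      = fun x => (A * q) * Real.cos (q * (x - d)) :=
  funext fun x => (hasDerivAt_piece A q d x).deriv

lemma deriv2_piece (A q d : ℝ) :
    deriv (deriv (fun y => A * Real.sin (q * (y - d))))
      = fun x => -((A * q * q) * Real.sin (q * (x - d))) := by
  rw [deriv_piece]
  exact funext fun x => by simpa [mul_assoc] using (hasDerivAt_piece' (A * q) q d x).deriv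

lemma contDiff_piece (A q d : ℝ) :
    ContDiff ℝ 2 (fun y => A * Real.sin (q * (y - d))) :=
  contDiff_const.mul (Real.contDiff_sin.comp (contDiff_const.mul (contDiff_id.sub contDiff_const)))

set_option maxHeartbeats 1600000 in
/-- In dimension one, for every `k ≥ 1` and `r > 0`, the pair
`(r⁻¹c_{k+1}(r), c_{k+1}(r))` belongs to the Fučík spectrum of `-d²/dx²` on
`H¹₀((a,b))`. -/
theorem statement_12 (a b : ℝ) (hab : a < b) (k : ℕ) (hk : 1 ≤ k)
    (r : ℝ) (hr : 0 < r) :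
    InFucik1D a b (r⁻¹ * ckr a b k r) (ckr a b k r) := by
  classical
  have hπ : (0:ℝ) < Real.pi := Real.pi_pos
  have hba : (0:ℝ) < b - a := sub_pos.mpr hab
  have hsr : (0:ℝ) < Real.sqrt r := Real.sqrt_pos.mpr hr
  have hsr2 : Real.sqrt r ^ 2 = r := Real.sq_sqrt hr.le
  obtain ⟨m, hm⟩ : ∃ x : ℕ, x = (k+2)/2 := ⟨_, rfl⟩
  obtain ⟨n, hn⟩ : ∃ x : ℕ, x = (k+1)/2 := ⟨_, rfl⟩
  have hm1 : 1 ≤ m := by omega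
  have hM1 : (1:ℝ) ≤ (m:ℝ) := by exact_mod_cast hm1
  have hN0 : (0:ℝ) ≤ (n:ℝ) := Nat.cast_nonneg n
  have hMN : 0 < (m:ℝ) * Real.sqrt r + (n:ℝ) := by nlinarith
  obtain ⟨σ, hσdef⟩ : ∃ x : ℝ, x = Real.pi * ((m:ℝ) * Real.sqrt r + (n:ℝ)) / (b - a) := ⟨_, rfl⟩
  have hσ : 0 < σ := by rw [hσdef]; exact div_pos (mul_pos hπ hMN) hba
  obtain ⟨α, hαdef⟩ : ∃ x : ℝ, x = σ / Real.sqrt r := ⟨_, rfl⟩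
  have hα : 0 < α := by rw [hαdef]; exact div_pos hσ hsr
  obtain ⟨lp, hlpdef⟩ : ∃ x : ℝ, x = Real.pi / α := ⟨_, rfl⟩
  obtain ⟨ln, hlndef⟩ : ∃ x : ℝ, x = Real.pi / σ := ⟨_, rfl⟩
  have hlp : 0 < lp := by rw [hlpdef]; exact div_pos hπ hα
  have hln : 0 < ln := by rw [hlndef]; exact div_pos hπ hσ
  obtain ⟨q, hqdef⟩ : ∃ x : ℕ → ℝ, x = fun i => if Even i then α else σ := ⟨_, rfl⟩
  have hq : ∀ i, 0 < q i := fun i => by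
    by_cases h : Even i <;> simp [hqdef, h, hα, hσ]
  obtain ⟨t, htdef⟩ : ∃ x : ℕ → ℝ, x = fun j => a + (((j+1)/2 : ℕ) : ℝ) * lp + (((j/2 : ℕ)) : ℝ) * ln := ⟨_, rfl⟩
  have hstep : ∀ j : ℕ, t (j+1) - t j = if Even j then lp else ln := by
    intro j
    rcases Nat.even_or_odd j with he | ho
    · obtain ⟨l, rfl⟩ := he
      have he2 : Even (l + l) := ⟨l, rfl⟩
      rw [if_pos he2]
      have e1 : (l + l + 1 + 1)/2 = l + 1 := by omega
      have e2 : (l + l + 1)/2 = l := by omega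
      have e3 : (l + l)/2 = l := by omega
      simp only [htdef, e1, e2, e3]
      push_cast; ring
    · obtain ⟨l, rfl⟩ := ho
      have ho2 : ¬ Even (2*l + 1) := by rintro ⟨w, hw⟩; omega
      rw [if_neg ho2]
      have e1 : (2*l + 1 + 1 + 1)/2 = l + 1 := by omega
      have e2 : (2*l + 1 + 1)/2 = l + 1 := by omega
      have e3 : (2*l + 1)/2 = l := by omega
      simp only [htdef, e1, e2, e3]
      push_cast; ring
  have hstep' : ∀ j, t j < t (j+1) := by
    intro j
    have h : 0 < t (j+1) - t j := by
      rw [hstep j]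
      split
      · exact hlp
      · exact hln
    linarith
  have hSM : StrictMono t := strictMono_nat_of_lt_succ hstep'
  have ht0 : t 0 = a := by norm_num [htdef]
  have hsum : (m:ℝ) * lp + (n:ℝ) * ln = b - a := by
    simp only [hlpdef, hlndef, hαdef, hσdef]
    field_simp
  have htk : t (k+1) = b := by
    have e1 : (k + 1 + 1)/2 = m := by omega
    have e2 : (k + 1)/2 = n := by omega
    simp only [htdef, e1, e2]
    linarith [hsum]
  have hqL : ∀ i, q i * (t (i+1) - t i) = Real.pi := by
    intro i
    rw [hstep i]
    rcases Nat.even_or_odd i with h | h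
    · simp only [hqdef, if_pos h, hlpdef]
      field_simp
    · have h' : ¬ Even i := by rcases h with ⟨l, rfl⟩; rintro ⟨w, hw⟩; omega
      simp only [hqdef, if_neg h', hlndef]
      field_simp
  -- value computations
  have hvp : r * lam1d lp = σ^2 := by
    have h1 : lam1d lp = α^2 := by
      rw [lam1d, hlpdef]
      field_simp
    rw [h1, hαdef, div_pow, hsr2]
    field_simp
  have hvn : lam1d ln = σ^2 := by
    rw [lam1d, hlndef]
    field_simp
  have hlenodd : ∀ i : ℕ, t (2*i+1) - t (2*i) = lp := by
    intro i
    have h := hstep (2*i)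
    have he2 : Even (2*i) := ⟨i, by ring⟩
    rw [if_pos he2] at h
    exact h
  have hleneven : ∀ i : ℕ, t (2*i+2) - t (2*i+1) = ln := by
    intro i
    have h := hstep (2*i+1)
    have ho2 : ¬ Even (2*i+1) := by rintro ⟨w, hw⟩; omega
    rw [if_neg ho2] at h
    have e : 2*i+1+1 = 2*i+2 := by omega
    rw [e] at h
    exact h
  have hUeq : ({ v : ℝ | ∃ i : ℕ, 2 * i + 1 ≤ k + 1 ∧ v = r * lam1d (t (2 * i + 1) - t (2 * i)) } ∪
        { v : ℝ | ∃ i : ℕ, 2 * i + 2 ≤ k + 1 ∧ v = lam1d (t (2 * i + 2) - t (2 * i + 1)) }) = {σ^2} := by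
    apply Set.eq_singleton_iff_unique_mem.mpr
    constructor
    · left
      exact ⟨0, by omega, by rw [hlenodd 0, hvp]⟩
    · rintro v (⟨i, hi, rfl⟩ | ⟨i, hi, rfl⟩)
      · rw [hlenodd i, hvp]
      · rw [hleneven i, hvn]
  have hfv : fucikVal r k t = σ^2 := by
    rw [fucikVal, hUeq, csSup_singleton]
  have hmem : σ^2 ∈ { v : ℝ | ∃ t : ℕ → ℝ, t 0 = a ∧ t (k + 1) = b ∧
      (∀ i j : ℕ, i < j → j ≤ k + 1 → t i < t j) ∧ v = fucikVal r k t } :=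
    ⟨t, ht0, htk, fun i j hij _ => hSM hij, hfv.symm⟩
  have hlb : ∀ v ∈ { v : ℝ | ∃ t : ℕ → ℝ, t 0 = a ∧ t (k + 1) = b ∧
      (∀ i j : ℕ, i < j → j ≤ k + 1 → t i < t j) ∧ v = fucikVal r k t }, σ^2 ≤ v := by
    rintro v ⟨t', h0', hk', hmono', rfl⟩
    rw [fucikVal]
    have hfin : ({ v : ℝ | ∃ i : ℕ, 2 * i + 1 ≤ k + 1 ∧ v = r * lam1d (t' (2 * i + 1) - t' (2 * i)) } ∪
        { v : ℝ | ∃ i : ℕ, 2 * i + 2 ≤ k + 1 ∧ v = lam1d (t' (2 * i + 2) - t' (2 * i + 1)) }).Finite := by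
      apply Set.Finite.union
      · apply Set.Finite.subset ((Set.finite_Iic k).image
          (fun i => r * lam1d (t' (2*i+1) - t' (2*i))))
        rintro v ⟨i, hi, rfl⟩
        exact ⟨i, Set.mem_Iic.mpr (by omega), rfl⟩
      · apply Set.Finite.subset ((Set.finite_Iic k).image
          (fun i => lam1d (t' (2*i+2) - t' (2*i+1))))
        rintro v ⟨i, hi, rfl⟩
        exact ⟨i, Set.mem_Iic.mpr (by omega), rfl⟩
    have hbdd := hfin.bddAbove
    have hex : ∃ w ∈ ({ v : ℝ | ∃ i : ℕ, 2 * i + 1 ≤ k + 1 ∧ v = r * lam1d (t' (2 * i + 1) - t' (2 * i)) } ∪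
        { v : ℝ | ∃ i : ℕ, 2 * i + 2 ≤ k + 1 ∧ v = lam1d (t' (2 * i + 2) - t' (2 * i + 1)) }), σ^2 ≤ w := by
      by_contra hcon
      push_neg at hcon
      have hgap : ∀ j ∈ Finset.range (k+1), (if Even j then lp else ln) < t' (j+1) - t' j := by
        intro j hj
        have hjk : j ≤ k := by
          have := Finset.mem_range.mp hj; omega
        have hd : 0 < t' (j+1) - t' j := sub_pos.mpr (hmono' j (j+1) (by omega) (by omega))
        rcases Nat.even_or_odd j with he | ho
        · rw [if_pos he]
          obtain ⟨l, hl⟩ := he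
          have hj2 : j = 2*l := by omega
          subst hj2
          have hw : r * lam1d (t' (2*l+1) - t' (2*l)) < σ^2 :=
            hcon _ (Or.inl ⟨l, by omega, rfl⟩)
          rw [lam1d] at hw
          have hd2 : (0:ℝ) < (t' (2*l+1) - t' (2*l))^2 := by positivity
          have hkey : r * Real.pi^2 < σ^2 * (t' (2*l+1) - t' (2*l))^2 := by
            rw [mul_div_assoc'] at hw
            exact (div_lt_iff₀ hd2).mp hw
          have hlp2 : lp^2 * σ^2 = r * Real.pi^2 := by
            have hlp' : lp = Real.pi * Real.sqrt r / σ := by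
              rw [hlpdef, hαdef]
              field_simp
            rw [hlp', div_pow, div_mul_cancel₀ _ (pow_ne_zero 2 hσ.ne'), mul_pow, hsr2]
            ring
          have hsq : lp^2 < (t' (2*l+1) - t' (2*l))^2 := by
            have := hkey
            rw [← hlp2] at this
            nlinarith [hσ.le]
          by_contra hcon2
          push_neg at hcon2
          have := pow_le_pow_left₀ hd.le hcon2 2
          nlinarith
        · have ho2 : ¬ Even j := by rcases ho with ⟨l, hl⟩; rintro ⟨w, hw⟩; omega
          rw [if_neg ho2]
          obtain ⟨l, hl⟩ := ho
          have hj2 : j = 2*l+1 := by omega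
          subst hj2
          have hw : lam1d (t' (2*l+2) - t' (2*l+1)) < σ^2 :=
            hcon _ (Or.inr ⟨l, by omega, rfl⟩)
          rw [lam1d] at hw
          have e : 2*l+1+1 = 2*l+2 := by omega
          rw [e]
          have hd' : 0 < t' (2*l+2) - t' (2*l+1) := by
            have := hmono' (2*l+1) (2*l+2) (by omega) (by omega); linarith
          have hd2 : (0:ℝ) < (t' (2*l+2) - t' (2*l+1))^2 := by positivity
          have hkey : Real.pi^2 < σ^2 * (t' (2*l+2) - t' (2*l+1))^2 :=
            (div_lt_iff₀ hd2).mp hw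
          have hln2 : ln^2 * σ^2 = Real.pi^2 := by
            rw [hlndef, div_pow, div_mul_cancel₀ _ (pow_ne_zero 2 hσ.ne')]
          have hsq : ln^2 < (t' (2*l+2) - t' (2*l+1))^2 := by
            rw [← hln2] at hkey
            nlinarith [hσ.le]
          by_contra hcon2
          push_neg at hcon2
          have := pow_le_pow_left₀ hd'.le hcon2 2
          nlinarith
      have hsum1 : ∑ j ∈ Finset.range (k+1), (t' (j+1) - t' j) = b - a := by
        rw [Finset.sum_range_sub (fun j => t' j), h0', hk']
      have hsum2 : ∑ j ∈ Finset.range (k+1), (if Even j then lp else ln) = b - a := by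
        have hcongr : ∀ j ∈ Finset.range (k+1), (if Even j then lp else ln) = t (j+1) - t j :=
          fun j _ => (hstep j).symm
        rw [Finset.sum_congr rfl hcongr, Finset.sum_range_sub (fun j => t j), ht0, htk]
      have hlt := Finset.sum_lt_sum_of_nonempty
        (Finset.nonempty_range_iff.mpr (Nat.succ_ne_zero k)) hgap
      rw [hsum1, hsum2] at hlt
      exact lt_irrefl _ hlt
    obtain ⟨w, hw, hc⟩ := hex
    exact hc.trans (le_csSup hbdd hw)
  have hckr : ckr a b k r = σ^2 := by
    rw [ckr]
    exact le_antisymm (csInf_le ⟨σ^2, fun v hv => hlb v hv⟩ hmem)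
      (le_csInf ⟨_, hmem⟩ hlb)
  -- construct the solution
  obtain ⟨F, hFdef⟩ : ∃ x : ℕ → ℝ → ℝ, x = fun i x => ((-1:ℝ)^i / q i) * Real.sin (q i * (x - t i)) := ⟨_, rfl⟩
  have hFc : ∀ i, ContDiff ℝ 2 (F i) := fun i => by
    simp only [hFdef]; exact contDiff_piece _ _ _
  have hFd1 : ∀ i, deriv (F i) = fun x => (((-1:ℝ)^i / q i) * q i) * Real.cos (q i * (x - t i)) :=
    fun i => by simp only [hFdef]; exact deriv_piece _ _ _
  have hFd2 : ∀ i, deriv (deriv (F i))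
      = fun x => -((((-1:ℝ)^i / q i) * q i * q i) * Real.sin (q i * (x - t i))) :=
    fun i => by simp only [hFdef]; exact deriv2_piece _ _ _
  have hjunc : ∀ i : ℕ, F i (t (i+1)) = F (i+1) (t (i+1)) ∧
      deriv (F i) (t (i+1)) = deriv (F (i+1)) (t (i+1)) ∧
      deriv (deriv (F i)) (t (i+1)) = deriv (deriv (F (i+1))) (t (i+1)) := by
    intro i
    have hL := hqL i
    refine ⟨?_, ?_, ?_⟩
    · simp only [hFdef]
      rw [hL]
      simp
    · simp only [hFd1 i, hFd1 (i+1)]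
      rw [hL, div_mul_cancel₀ _ (hq i).ne', div_mul_cancel₀ _ (hq (i+1)).ne']
      simp [Real.cos_pi, pow_succ]
    · simp only [hFd2 i, hFd2 (i+1)]
      rw [hL]
      simp
  obtain ⟨u, hu, hagree⟩ := multi_glue k t F hFc hjunc (fun i j h => hSM.monotone h)
  have hst0 : t (0+1) = a + lp := by
    have h := hstep 0
    rw [if_pos (Even.zero)] at h
    rw [ht0] at h
    linarith
  have hua : u a = 0 := by
    obtain ⟨e, _, _⟩ := hagree 0 (Nat.zero_le k) a (le_of_eq ht0) (by rw [hst0]; linarith)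
    rw [e]
    simp only [hFdef]
    rw [ht0]
    simp
  have hub : u b = 0 := by
    have h1 : t k ≤ b := htk ▸ hSM.monotone (by omega : k ≤ k+1)
    obtain ⟨e, _, _⟩ := hagree k le_rfl b h1 (le_of_eq htk.symm)
    rw [e]
    simp only [hFdef]
    have harg : q k * (b - t k) = Real.pi := by
      rw [← htk]
      exact hqL k
    rw [harg]
    simp
  have hx0ab : a + lp/2 ∈ Set.Ioo a b := by
    constructor
    · linarith
    · have h1 : t (0+1) ≤ t (k+1) := hSM.monotone (by omega)
      rw [hst0, htk] at h1
      linarith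
  have hux0 : u (a + lp/2) ≠ 0 := by
    obtain ⟨e, _, _⟩ := hagree 0 (Nat.zero_le k) (a + lp/2)
      (by rw [ht0]; linarith) (by rw [hst0]; linarith)
    rw [e]
    simp only [hFdef]
    rw [ht0]
    have harg : q 0 * (a + lp/2 - a) = Real.pi/2 := by
      simp only [hqdef, if_pos (Even.zero), hlpdef]
      field_simp
      ring
    rw [harg]
    simp only [pow_zero, Real.sin_pi_div_two, mul_one]
    exact one_div_ne_zero (hq 0).ne'
  rw [hckr]
  unfold InFucik1D
  refine ⟨u, hu, hua, hub, ⟨a + lp/2, hx0ab, hux0⟩, ?_⟩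
  intro x hx
  obtain ⟨i, hidef⟩ : ∃ i : ℕ, i = Nat.findGreatest (fun j => t j ≤ x) k := ⟨_, rfl⟩
  have hik : i ≤ k := by rw [hidef]; exact Nat.findGreatest_le k
  have hi1 : t i ≤ x := by
    rw [hidef]
    exact Nat.findGreatest_spec (P := fun j => t j ≤ x) (Nat.zero_le k)
      (show t 0 ≤ x by rw [ht0]; exact hx.1.le)
  have hi2 : x ≤ t (i+1) := by
    rcases lt_or_ge i k with hik' | hik'
    · by_contra hcon
      push_neg at hcon
      exact (Nat.findGreatest_is_greatest (P := fun j => t j ≤ x) (by rw [← hidef]; omega) (by omega)) hcon.le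
    · have hieq : i = k := le_antisymm hik hik'
      rw [hieq, htk]
      exact hx.2.le
  obtain ⟨hux, _, hu2x⟩ := hagree i hik x hi1 hi2
  have hθ0 : 0 ≤ q i * (x - t i) := mul_nonneg (hq i).le (by linarith)
  have hθπ : q i * (x - t i) ≤ Real.pi := by
    rw [← hqL i]
    exact mul_le_mul_of_nonneg_left (by linarith) (hq i).le
  have hS : 0 ≤ Real.sin (q i * (x - t i)) := Real.sin_nonneg_of_nonneg_of_le_pi hθ0 hθπ
  rw [hux, hu2x, hFd2 i]
  simp only [hFdef]
  rw [div_mul_cancel₀ _ (hq i).ne']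
  rcases Nat.even_or_odd i with he | ho
  · have hm1' : ((-1:ℝ))^i = 1 := he.neg_one_pow
    have hqi : q i = α := by simp only [hqdef, if_pos he]
    rw [hqi] at hS
    rw [hm1', hqi]
    have hnn : 0 ≤ 1 / α * Real.sin (α * (x - t i)) :=
      mul_nonneg (by positivity) hS
    rw [one_div] at hnn ⊢
    rw [max_eq_left hnn, max_eq_right (neg_nonpos.mpr hnn)]
    have hα2 : α^2 * r = σ^2 := by
      rw [hαdef, div_pow, hsr2]
      field_simp
    rw [← hα2]
    field_simp
    ring
  · have hm1' : ((-1:ℝ))^i = -1 := ho.neg_one_pow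
    have hqi : q i = σ := by
      simp only [hqdef, if_neg (by rcases ho with ⟨l, hl⟩; rintro ⟨w, hw⟩; omega : ¬ Even i)]
    rw [hqi] at hS
    rw [hm1', hqi]
    have hnn : 0 ≤ 1 / σ * Real.sin (σ * (x - t i)) :=
      mul_nonneg (by positivity) hS
    have hle : -1 / σ * Real.sin (σ * (x - t i)) ≤ 0 := by
      rw [neg_div, neg_mul]
      linarith [hnn]
    rw [max_eq_right hle, max_eq_left (by linarith : (0:ℝ) ≤ -(-1 / σ * Real.sin (σ * (x - t i))))]
    field_simp
    ring
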